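/- Let γ be a probability vector on {1,...,K} with all γ_k > 0, let x_k = Z*_k/Z_k > 0, and define V(x) = −Σ_k γ_k log( (γ_k x_k / Σ_ℓ γ_ℓ x_ℓ) / γ_k ). Along the flow Z'_k = (Σ_ℓ γ_ℓ x_ℓ^{−η/(η+1)} / Σ_ℓ γ_ℓ x_ℓ^{1/(η+1)}) Z*_k − Z_k (with η ≥ 0 fixed), one has dV/dt = −Σ_k γ_k (x_k/Σ_ℓγ_ℓx_ℓ − 1)·((Σ_ℓ γ_ℓ x_ℓ^{−η/(η+1)}/Σ_ℓ γ_ℓ x_ℓ^{1/(η+1)}) x_k − 1) ≤ 0, with equality if and only if all x_k are equal. Moreover for η = 0 this derivative equals −Σ_k γ_k (x_k/Σ_ℓγ_ℓx_ℓ − 1)². -/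

import Mathlib

open Finset

/-- Relative entropy V(x) = D_KL(γ ‖ r) with r_k ∝ γ_k x_k. -/
noncomputable def relEnt (K : ℕ) (γ x : Fin K → ℝ) : ℝ :=
  -∑ k, γ k * Real.log ((γ k * x k / ∑ l, γ l * x l) / γ k)

/-- The visit-control factor T(x) = E_γ[x^{-η/(η+1)}] / E_γ[x^{1/(η+1)}]. -/
noncomputable def vcFactor (K : ℕ) (γ x : Fin K → ℝ) (η : ℝ) : ℝ :=
  (∑ l, γ l * x l ^ (-η / (η + 1))) / (∑ l, γ l * x l ^ (1 / (η + 1)))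

/-- The claimed value of dV/dt along the visit-controlled flow. -/
noncomputable def vcDeriv (K : ℕ) (γ x : Fin K → ℝ) (η : ℝ) : ℝ :=
  -∑ k, γ k * (x k / (∑ l, γ l * x l) - 1) * (vcFactor K γ x η * x k - 1)

lemma vcFactor_pos (K : ℕ) (hK : 1 ≤ K) (γ x : Fin K → ℝ) (hγ : ∀ k, 0 < γ k)
    (hx : ∀ k, 0 < x k) (η : ℝ) : 0 < vcFactor K γ x η := by
  have : Nonempty (Fin K) := Fin.pos_iff_nonempty.mp hK
  exact div_pos
    (Finset.sum_pos (fun l _ => mul_pos (hγ l) (Real.rpow_pos_of_pos (hx l) _)) Finset.univ_nonempty)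
    (Finset.sum_pos (fun l _ => mul_pos (hγ l) (Real.rpow_pos_of_pos (hx l) _)) Finset.univ_nonempty)

lemma vcDeriv_eq (K : ℕ) (γ x : Fin K → ℝ) (hγsum : ∑ k, γ k = 1) (η : ℝ)
    (hS0 : (∑ l, γ l * x l) ≠ 0) :
    vcDeriv K γ x η = -(vcFactor K γ x η / (∑ l, γ l * x l)) *
      ∑ k, γ k * (x k - ∑ l, γ l * x l) ^ 2 := by
  set T := vcFactor K γ x η with hT
  set S := ∑ l, γ l * x l with hS
  unfold vcDeriv
  rw [← hS, ← hT]
  have e1 : ∀ k ∈ Finset.univ, γ k * (x k / S - 1) * (T * x k - 1)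
      = (T/S) * (γ k * (x k * x k)) - ((1/S) * (γ k * x k) + T * (γ k * x k)) + γ k := by
    intro k _; field_simp; ring
  have e2 : ∀ k ∈ Finset.univ, γ k * (x k - S) ^ 2
      = γ k * (x k * x k) - 2*S*(γ k * x k) + S*S*γ k := by
    intro k _; ring
  rw [Finset.sum_congr rfl e1, Finset.sum_congr rfl e2]
  simp only [Finset.sum_add_distrib, Finset.sum_sub_distrib, ← Finset.mul_sum, ← hS, hγsum]
  field_simp
  ring

lemma parts234 (K : ℕ) (hK : 1 ≤ K) (γ x : Fin K → ℝ) (hγsum : ∑ k, γ k = 1)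
    (hγ : ∀ k, 0 < γ k) (hx : ∀ k, 0 < x k) (η : ℝ) :
    vcDeriv K γ x η ≤ 0 ∧
    (vcDeriv K γ x η = 0 ↔ ∀ k l, x k = x l) ∧
    (η = 0 → vcDeriv K γ x η = -∑ k, γ k * (x k / (∑ l, γ l * x l) - 1) ^ 2) := by
  have hne : Nonempty (Fin K) := Fin.pos_iff_nonempty.mp hK
  have hSpos : 0 < ∑ l, γ l * x l :=
    Finset.sum_pos (fun l _ => mul_pos (hγ l) (hx l)) Finset.univ_nonempty
  have hTpos := vcFactor_pos K hK γ x hγ hx η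
  have heq := vcDeriv_eq K γ x hγsum η hSpos.ne'
  have hQnn : ∀ k ∈ Finset.univ, (0:ℝ) ≤ γ k * (x k - ∑ l, γ l * x l) ^ 2 :=
    fun k _ => mul_nonneg (hγ k).le (sq_nonneg _)
  refine ⟨?_, ?_, ?_⟩
  · rw [heq, neg_mul]
    exact neg_nonpos_of_nonneg (mul_nonneg (div_pos hTpos hSpos).le
      (Finset.sum_nonneg hQnn))
  · rw [heq]
    constructor
    · intro h
      have hQnonneg : 0 ≤ ∑ k, γ k * (x k - ∑ l, γ l * x l) ^ 2 :=
        Finset.sum_nonneg hQnn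
      have hQle : (∑ k, γ k * (x k - ∑ l, γ l * x l) ^ 2) ≤ 0 := by
        nlinarith [div_pos hTpos hSpos]
      have hQ := le_antisymm hQle hQnonneg
      have := (Finset.sum_eq_zero_iff_of_nonneg hQnn).mp hQ
      intro k l
      have hk : x k = ∑ l, γ l * x l := by
        have := this k (Finset.mem_univ k)
        have h2 := mul_eq_zero.mp this
        rcases h2 with h2 | h2
        · exact absurd h2 (hγ k).ne'
        · have := pow_eq_zero_iff (n := 2) (by norm_num) |>.mp h2
          linarith [sub_eq_zero.mp this]
      have hl : x l = ∑ l, γ l * x l := by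
        have := this l (Finset.mem_univ l)
        rcases mul_eq_zero.mp this with h2 | h2
        · exact absurd h2 (hγ l).ne'
        · have := pow_eq_zero_iff (n := 2) (by norm_num) |>.mp h2
          linarith [sub_eq_zero.mp this]
      rw [hk, hl]
    · intro h
      have hall : ∀ k, x k = ∑ l, γ l * x l := by
        intro k
        have : (∑ l, γ l * x l) = ∑ l, γ l * x k :=
          Finset.sum_congr rfl fun l _ => by rw [h l k]
        rw [this, ← Finset.sum_mul, hγsum, one_mul]
      have hQ0 : (∑ k, γ k * (x k - ∑ l, γ l * x l) ^ 2) = 0 :=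
        Finset.sum_eq_zero fun k _ => by rw [hall k, sub_self]; simp
      rw [hQ0, mul_zero]
  · intro hη0
    subst hη0
    unfold vcDeriv vcFactor
    have hT1 : (∑ l, γ l * x l ^ (-(0:ℝ) / (0 + 1))) / (∑ l, γ l * x l ^ ((1:ℝ) / (0 + 1)))
        = 1 / ∑ l, γ l * x l := by
      norm_num [Real.rpow_one, hγsum]
    rw [hT1]
    congr 1
    refine Finset.sum_congr rfl fun k _ => ?_
    ring

lemma part1 (K : ℕ) (hK : 1 ≤ K)
    (γ : Fin K → ℝ) (hγsum : ∑ k, γ k = 1) (hγ : ∀ k, 0 < γ k)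
    (η : ℝ)
    (Zstar : Fin K → ℝ) (hZstar : ∀ k, 0 < Zstar k)
    (Z : ℝ → Fin K → ℝ) (hZpos : ∀ t k, 0 < Z t k)
    (hflow : ∀ t k, HasDerivAt (fun s => Z s k)
      (vcFactor K γ (fun j => Zstar j / Z t j) η * Zstar k - Z t k) t)
    (t : ℝ) :
    HasDerivAt (fun s => relEnt K γ (fun j => Zstar j / Z s j))
      (vcDeriv K γ (fun j => Zstar j / Z t j) η) t := by
  have hne : Nonempty (Fin K) := Fin.pos_iff_nonempty.mp hK
  set T := vcFactor K γ (fun j => Zstar j / Z t j) η with hT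
  have hZ0 : ∀ s k, Z s k ≠ 0 := fun s k => (hZpos s k).ne'
  have hSpos : ∀ s, 0 < ∑ l, γ l * (Zstar l / Z s l) := fun s =>
    Finset.sum_pos (fun l _ => mul_pos (hγ l) (div_pos (hZstar l) (hZpos s l)))
      Finset.univ_nonempty
  -- derivative of ∑ γ k log (Z s k)
  have h1 : HasDerivAt (fun s => ∑ k, γ k * Real.log (Z s k))
      (∑ k, γ k * ((T * Zstar k - Z t k) / Z t k)) t :=
    HasDerivAt.fun_sum fun k _ => ((hflow t k).log (hZ0 t k)).const_mul (γ k)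
  -- derivative of ∑ γ l (Zstar l / Z s l)
  have h2 : HasDerivAt (fun s => ∑ l, γ l * (Zstar l / Z s l))
      (∑ l, γ l * (Zstar l * (-(T * Zstar l - Z t l) / (Z t l) ^ 2))) t := by
    apply HasDerivAt.fun_sum
    intro l _
    have h := (((hflow t l).inv (hZ0 t l)).const_mul (Zstar l)).const_mul (γ l)
    rw [← hT] at h
    simpa [div_eq_mul_inv] using h
  have h3 : HasDerivAt (fun s => Real.log (∑ l, γ l * (Zstar l / Z s l)))
      ((∑ l, γ l * (Zstar l * (-(T * Zstar l - Z t l) / (Z t l) ^ 2))) /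
        (∑ l, γ l * (Zstar l / Z t l))) t :=
    h2.log (hSpos t).ne'
  have h4 : HasDerivAt (fun s => (-∑ k, γ k * Real.log (Zstar k)) +
      ((∑ k, γ k * Real.log (Z s k)) + Real.log (∑ l, γ l * (Zstar l / Z s l))))
      ((∑ k, γ k * ((T * Zstar k - Z t k) / Z t k)) +
        (∑ l, γ l * (Zstar l * (-(T * Zstar l - Z t l) / (Z t l) ^ 2))) /
        (∑ l, γ l * (Zstar l / Z t l))) t :=
    (h1.add h3).const_add _
  have hfun : (fun s => (-∑ k, γ k * Real.log (Zstar k)) +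
      ((∑ k, γ k * Real.log (Z s k)) + Real.log (∑ l, γ l * (Zstar l / Z s l))))
      = (fun s => relEnt K γ (fun j => Zstar j / Z s j)) := by
    funext s
    unfold relEnt
    have hterm : ∀ k ∈ Finset.univ,
        γ k * Real.log ((γ k * (Zstar k / Z s k) / ∑ l, γ l * (Zstar l / Z s l)) / γ k)
        = γ k * Real.log (Zstar k) - γ k * Real.log (Z s k)
          - γ k * Real.log (∑ l, γ l * (Zstar l / Z s l)) := by
      intro k _
      have h5 : (γ k * (Zstar k / Z s k) / ∑ l, γ l * (Zstar l / Z s l)) / γ k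
          = (Zstar k / Z s k) / ∑ l, γ l * (Zstar l / Z s l) := by
        rw [show γ k * (Zstar k / Z s k) / (∑ l, γ l * (Zstar l / Z s l)) / γ k
            = (γ k / γ k) * ((Zstar k / Z s k) / ∑ l, γ l * (Zstar l / Z s l)) from by ring,
          div_self (hγ k).ne', one_mul]
      rw [h5, Real.log_div (div_pos (hZstar k) (hZpos s k)).ne' (hSpos s).ne',
        Real.log_div (hZstar k).ne' (hZ0 s k)]
      ring
    rw [Finset.sum_congr rfl hterm]
    simp only [Finset.sum_sub_distrib, ← Finset.sum_mul, hγsum]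
    ring
  rw [hfun] at h4
  convert h4 using 1
  -- value equality
  set S := ∑ l, γ l * (Zstar l / Z t l) with hS
  rw [Finset.sum_div, ← Finset.sum_add_distrib]
  unfold vcDeriv
  rw [← hT, ← hS, neg_eq_iff_eq_neg, ← Finset.sum_neg_distrib]
  refine Finset.sum_congr rfl fun k _ => ?_
  have hzk := hZ0 t k
  have hs := (hSpos t).ne'
  rw [← hS] at hs
  field_simp
  ring

theorem lyapunov_decrease_under_visit_control (K : ℕ) (hK : 1 ≤ K)
    (γ : Fin K → ℝ) (hγsum : ∑ k, γ k = 1) (hγ : ∀ k, 0 < γ k)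
    (η : ℝ) (hη : 0 ≤ η)
    (Zstar : Fin K → ℝ) (hZstar : ∀ k, 0 < Zstar k)
    (Z : ℝ → Fin K → ℝ) (hZpos : ∀ t k, 0 < Z t k)
    (hflow : ∀ t k, HasDerivAt (fun s => Z s k)
      (vcFactor K γ (fun j => Zstar j / Z t j) η * Zstar k - Z t k) t) :
    (∀ t : ℝ, HasDerivAt (fun s => relEnt K γ (fun j => Zstar j / Z s j))
      (vcDeriv K γ (fun j => Zstar j / Z t j) η) t) ∧
    (∀ t : ℝ, vcDeriv K γ (fun j => Zstar j / Z t j) η ≤ 0) ∧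
    (∀ t : ℝ, vcDeriv K γ (fun j => Zstar j / Z t j) η = 0 ↔
      ∀ k l, Zstar k / Z t k = Zstar l / Z t l) ∧
    (η = 0 → ∀ t : ℝ, vcDeriv K γ (fun j => Zstar j / Z t j) η =
      -∑ k, γ k *
        (Zstar k / Z t k / (∑ l, γ l * (Zstar l / Z t l)) - 1) ^ 2) := by
  have hx : ∀ t k, 0 < Zstar k / Z t k := fun t k => div_pos (hZstar k) (hZpos t k)
  refine ⟨part1 K hK γ hγsum hγ η Zstar hZstar Z hZpos hflow, ?_, ?_, ?_⟩
  · intro t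
    exact (parts234 K hK γ (fun j => Zstar j / Z t j) hγsum hγ (hx t) η).1
  · intro t
    exact (parts234 K hK γ (fun j => Zstar j / Z t j) hγsum hγ (hx t) η).2.1
  · intro hη0 t
    exact (parts234 K hK γ (fun j => Zstar j / Z t j) hγsum hγ (hx t) η).2.2 hη0
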